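/- Let A be a real symmetric d×d matrix with orthonormal eigenvectors u_1, ..., u_d and eigenvalues λ_1 ≥ λ_2 ≥ ... ≥ λ_d, and suppose λ_1 − λ_2 ≥ G for some G > 0. Let c ∈ (0, 1/32), let w be a unit vector with ⟨w, u_1⟩ ≥ 0, set λ = wᵀAw, and suppose λ_1 − λ ≤ 16cG. Then (1/2)λ_1 − (1/2) wᵀ A w ≤ 2‖(λ I − A) w‖² / G. -/

import Mathlib

open scoped RealInnerProductSpace

/-- **gradient dominance near the top eigenvector.** Let `T` be a
symmetric operator on `ℝ^d` with orthonormal eigenvectors `u i`, eigenvalues `lam i`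
in nonincreasing order, and eigengap `lam 0 − lam 1 ≥ G > 0`. Let `c ∈ (0, 1/32)`,
let `w` be a unit vector with `⟨w, u 0⟩ ≥ 0`, and set `λ = ⟨w, T w⟩`. If
`lam 0 − λ ≤ 16cG`, then `(1/2)·lam 0 − (1/2)⟨w, T w⟩ ≤ 2‖(λI − T)w‖²/G`. -/
theorem stmt_13 {d : ℕ} (hd : 2 ≤ d)
    (T : EuclideanSpace ℝ (Fin d) →ₗ[ℝ] EuclideanSpace ℝ (Fin d))
    (hT : T.IsSymmetric)
    (u : Fin d → EuclideanSpace ℝ (Fin d)) (hu : Orthonormal ℝ u)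
    (lam : Fin d → ℝ) (heig : ∀ i, T (u i) = lam i • u i) (hmono : Antitone lam)
    (G : ℝ) (hG : 0 < G)
    (hgap : lam ⟨0, by omega⟩ - lam ⟨1, by omega⟩ ≥ G)
    (c : ℝ) (hc : 0 < c) (hc' : c < 1 / 32)
    (w : EuclideanSpace ℝ (Fin d)) (hw : ‖w‖ = 1)
    (hpos : ⟪w, u ⟨0, by omega⟩⟫ ≥ 0)
    (hclose : lam ⟨0, by omega⟩ - ⟪w, T w⟫ ≤ 16 * c * G) :
    (1 / 2) * lam ⟨0, by omega⟩ - (1 / 2) * ⟪w, T w⟫ ≤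
      2 * ‖⟪w, T w⟫ • w - T w‖ ^ 2 / G := by
  have : Nonempty (Fin d) := ⟨⟨0, by omega⟩⟩
  have card : Fintype.card (Fin d) = Module.finrank ℝ (EuclideanSpace ℝ (Fin d)) := by
    simp [finrank_euclideanSpace]
  set i0 : Fin d := ⟨0, by omega⟩
  set i1 : Fin d := ⟨1, by omega⟩
  set lv : ℝ := ⟪w, T w⟫ with hlv
  set a : Fin d → ℝ := fun i => ⟪w, u i⟫ with ha
  let B : Module.Basis (Fin d) ℝ (EuclideanSpace ℝ (Fin d)) := basisOfOrthonormalOfCardEqFinrank hu card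
  have hBu : ⇑B = u := coe_basisOfOrthonormalOfCardEqFinrank hu card
  have huB : Orthonormal ℝ ⇑B := by rw [hBu]; exact hu
  let b : OrthonormalBasis (Fin d) ℝ (EuclideanSpace ℝ (Fin d)) := B.toOrthonormalBasis huB
  have hbu : ∀ i, b i = u i := by
    intro i
    show (B.toOrthonormalBasis huB) i = u i
    rw [Module.Basis.coe_toOrthonormalBasis, hBu]
  -- inner products with eigenvectors
  have hTu : ∀ i, ⟪u i, T w⟫ = lam i * a i := by
    intro i
    rw [← hT (u i) w, heig i, real_inner_smul_left, real_inner_comm]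
  -- Parseval-type identities
  have hsum1 : ∑ i, a i ^ 2 = 1 := by
    have := b.sum_inner_mul_inner w w
    simp only [hbu] at this
    have hw2 : ⟪w, w⟫ = 1 := by
      rw [real_inner_self_eq_norm_sq, hw]; norm_num
    rw [hw2] at this
    rw [← this]
    apply Finset.sum_congr rfl
    intro i _
    show (⟪w, u i⟫ : ℝ) ^ 2 = ⟪w, u i⟫ * ⟪u i, w⟫
    rw [real_inner_comm (u i) w]; ring
  have hlam : lv = ∑ i, lam i * a i ^ 2 := by
    have := b.sum_inner_mul_inner w (T w)
    simp only [hbu] at this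
    rw [hlv, ← this]
    apply Finset.sum_congr rfl
    intro i _
    rw [hTu i]; ring
  have hg : ‖lv • w - T w‖ ^ 2 = ∑ i, (lv - lam i) ^ 2 * a i ^ 2 := by
    have h0 := b.sum_inner_mul_inner (lv • w - T w) (lv • w - T w)
    simp only [hbu] at h0
    have hgi : ∀ i, ⟪lv • w - T w, u i⟫ = (lv - lam i) * a i := by
      intro i
      rw [inner_sub_left, real_inner_smul_left, real_inner_comm (u i) (T w), hTu i]
      show lv * ⟪w, u i⟫ - lam i * a i = (lv - lam i) * a i
      ring
    rw [real_inner_self_eq_norm_sq] at h0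
    rw [← h0]
    apply Finset.sum_congr rfl
    intro i _
    rw [real_inner_comm (lv • w - T w) (u i), hgi i]; ring
  -- the key termwise inequality
  have hterm : ∀ i ∈ Finset.univ, (G / 4) * ((lam i0 - lam i) * a i ^ 2)
      ≤ (lv - lam i) ^ 2 * a i ^ 2 := by
    intro i _
    by_cases hi : i = i0
    · subst hi; simp; positivity
    · have h1le : i1 ≤ i := by
        have : i.val ≠ 0 := fun h => hi (Fin.ext h)
        exact Fin.mk_le_of_le_val (by omega)
      have hle : lam i ≤ lam i1 := hmono h1le
      have h2 : lam i0 - lam i ≥ G := by linarith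
      have h3 : lv ≥ lam i0 - 16 * c * G := by linarith
      have h4 : 16 * c * G ≤ G / 2 := by nlinarith
      have h5 : lv - lam i ≥ (lam i0 - lam i) / 2 := by linarith
      have hD : (0:ℝ) ≤ lam i0 - lam i := by linarith
      have key : (G / 4) * (lam i0 - lam i) ≤ (lv - lam i) ^ 2 := by
        nlinarith [sq_nonneg (lv - lam i), sq_nonneg (lam i0 - lam i)]
      nlinarith [sq_nonneg (a i), mul_le_mul_of_nonneg_right key (sq_nonneg (a i))]
  have hsum := Finset.sum_le_sum hterm
  rw [← Finset.mul_sum] at hsum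
  have hexp : ∑ i, (lam i0 - lam i) * a i ^ 2 = lam i0 - lv := by
    have h1 : ∑ i, (lam i0 - lam i) * a i ^ 2
        = ∑ i, (lam i0 * a i ^ 2 - lam i * a i ^ 2) := by
      apply Finset.sum_congr rfl; intros; ring
    rw [h1, Finset.sum_sub_distrib, ← Finset.mul_sum, hsum1, hlam]; ring
  rw [hexp] at hsum
  rw [hg, le_div_iff₀ hG]
  nlinarith [hsum]
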